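/- For any nonempty closed convex cone C in a finite-dimensional real inner product space X and any x in X, x = Π_C(x) − Π_{C*}(−x), where Π_C denotes the metric projection onto C and C* = {d : ⟨d, x⟩ ≥ 0 for all x ∈ C} is the dual cone. -/

import Mathlib

/-- `p` is the metric projection of `x` onto `C`. -/
def IsMetricProj {X : Type*} [NormedAddCommGroup X] [InnerProductSpace ℝ X]
    (C : Set X) (x p : X) : Prop :=
  p ∈ C ∧ ∀ q ∈ C, ‖x - p‖ ≤ ‖x - q‖

/-- The dual cone `C* = {d : ⟨d, x⟩ ≥ 0 for all x ∈ C}`. -/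
def dualCone {X : Type*} [NormedAddCommGroup X] [InnerProductSpace ℝ X]
    (C : Set X) : Set X :=
  {d | ∀ x ∈ C, 0 ≤ (inner ℝ d x : ℝ)}

/-- Metric projection onto a convex set satisfies the variational inequality. -/
theorem isMetricProj_inner_le {X : Type*} [NormedAddCommGroup X] [InnerProductSpace ℝ X]
    {C : Set X} (hconv : Convex ℝ C) {x p : X} (hp : IsMetricProj C x p) :
    ∀ c ∈ C, (inner ℝ (x - p) (c - p) : ℝ) ≤ 0 := by
  obtain ⟨hpC, hmin⟩ := hp
  have hne : Nonempty C := ⟨⟨p, hpC⟩⟩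
  have heq : ‖x - p‖ = ⨅ w : C, ‖x - w‖ := by
    refine le_antisymm (le_ciInf fun w => hmin w w.2) ?_
    exact ciInf_le ⟨0, fun _ ⟨w, hw⟩ => hw ▸ norm_nonneg _⟩ (⟨p, hpC⟩ : C)
  exact (norm_eq_iInf_iff_real_inner_le_zero hconv hpC).1 heq

/-- Moreau decomposition: `x = Π_C(x) − Π_{C*}(−x)`. -/
theorem moreau_decomposition {X : Type*} [NormedAddCommGroup X] [InnerProductSpace ℝ X]
    [FiniteDimensional ℝ X]
    (C : Set X) (hne : C.Nonempty) (hcl : IsClosed C) (hconv : Convex ℝ C)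
    (hcone : ∀ c ∈ C, ∀ t : ℝ, 0 ≤ t → t • c ∈ C)
    (x p q : X) (hp : IsMetricProj C x p) (hq : IsMetricProj (dualCone C) (-x) q) :
    x = p - q := by
  have hvar := isMetricProj_inner_le hconv hp
  have hpC := hp.1
  -- ⟨x - p, p⟩ = 0
  have h2p : (inner ℝ (x - p) p : ℝ) ≤ 0 := by
    have := hvar ((2:ℝ) • p) (hcone p hpC 2 (by norm_num))
    have he : (2:ℝ) • p - p = p := by module
    rwa [he] at this
  have h0 : (0:X) ∈ C := by
    have := hcone p hpC 0 le_rfl; simpa using this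
  have h0p : (0:ℝ) ≤ (inner ℝ (x - p) p : ℝ) := by
    have := hvar 0 h0
    simp only [zero_sub, inner_neg_right] at this
    linarith
  have hxp : (inner ℝ (x - p) p : ℝ) = 0 := le_antisymm h2p h0p
  -- p - x ∈ dualCone C
  have hdual : p - x ∈ dualCone C := by
    intro c hc
    have := hvar c hc
    rw [inner_sub_right, hxp] at this
    rw [show p - x = -(x - p) by abel, inner_neg_left]
    linarith
  -- p - x satisfies the variational inequality for projecting -x onto dualCone C
  have hq' : ∀ d ∈ dualCone C, (inner ℝ (-x - (p - x)) (d - (p - x)) : ℝ) ≤ 0 := by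
    intro d hd
    have h1 : -x - (p - x) = -p := by abel
    rw [h1, inner_neg_left, inner_sub_right, inner_sub_right]
    have hdp : (0:ℝ) ≤ inner ℝ d p := hd p hpC
    have hc : (inner ℝ p d : ℝ) = inner ℝ d p := real_inner_comm _ _
    have hpp : (inner ℝ p (p - x) : ℝ) = 0 := by
      rw [show p - x = -(x - p) by abel, inner_neg_right, real_inner_comm, hxp]; ring
    rw [inner_sub_right] at hpp
    linarith
  -- dualCone C is convex
  have hDconv : Convex ℝ (dualCone C) := by
    intro a ha b hb s t hs ht hst c hc
    have := ha c hc; have := hb c hc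
    rw [inner_add_left, real_inner_smul_left, real_inner_smul_left]
    positivity
  have hqvar := isMetricProj_inner_le hDconv hq
  have h1 := hqvar (p - x) hdual
  have h2 := hq' q hq.1
  have hsub := inner_sub_left (𝕜 := ℝ) (-x - q) (-x - (p - x)) ((p - x) - q)
  rw [show (-x - q) - (-x - (p - x)) = (p - x) - q from by abel] at hsub
  have hB : (inner ℝ (-x - (p - x)) ((p - x) - q) : ℝ)
      = - (inner ℝ (-x - (p - x)) (q - (p - x)) : ℝ) := by
    rw [show (p - x) - q = -(q - (p - x)) from by abel, inner_neg_right]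
  have key : (inner ℝ ((p - x) - q) ((p - x) - q) : ℝ) ≤ 0 := by
    rw [hsub, hB]; linarith
  have hz : (p - x) - q = 0 :=
    inner_self_eq_zero.mp (le_antisymm key real_inner_self_nonneg)
  have : q = p - x := (sub_eq_zero.mp hz).symm
  rw [this]; abel
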